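/- Sub-Gaussian bound on accumulated quantization noise with zooming: Let P be an n×n symmetric doubly stochastic matrix with σ₂(P) < 1, let s : ℕ → (0,∞) be a zooming sequence, and let {ξ_j(r) : j ∈ {1,…,n}, r = 0,…,t} be independent zero-mean real random variables such that s(r)·ξ_j(r) is sub-Gaussian with variance proxy s²(r). Define S_i(t+1) = ∑_{r=1}^{t+1} ∑_{j=1}^n ( 1/n − [P^{t−r+2}]_{ij} )·s(r−1)·ξ_j(r−1). Then S_i(t+1) is zero-mean and sub-Gaussian with variance proxy at most ∑_{r=1}^{t+1} s²(r−1)·σ₂(P)^{2(t−r+2)}. -/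

import Mathlib

open Finset MeasureTheory ProbabilityTheory

/-- A real random variable `Y` is sub-Gaussian with variance proxy `v` if
`E[exp(l (Y − E Y))] ≤ exp(l² v / 2)` for every `l : ℝ`. -/
def IsSubGaussian {Ω : Type*} [MeasurableSpace Ω] (μ : Measure Ω) (Y : Ω → ℝ) (v : ℝ) :
    Prop :=
  ∀ l : ℝ, ∫ ω, Real.exp (l * (Y ω - ∫ ω', Y ω' ∂μ)) ∂μ ≤ Real.exp (l ^ 2 * v / 2)

/-- An `n × n` real matrix is doubly stochastic if all its entries are nonnegative and
every row sum and every column sum equals 1. -/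
def DoublyStochastic {n : ℕ} (P : Matrix (Fin n) (Fin n) ℝ) : Prop :=
  (∀ i j, 0 ≤ P i j) ∧ (∀ i, ∑ j, P i j = 1) ∧ (∀ j, ∑ i, P i j = 1)

/-- The ℓ₂-norm on `ℝⁿ`. -/
noncomputable def l2norm {n : ℕ} (v : Fin n → ℝ) : ℝ := Real.sqrt (∑ i, v i ^ 2)

/-- The second-largest singular value of a symmetric doubly stochastic matrix, characterized
as the ℓ₂-operator norm of the matrix restricted to the subspace of mean-zero vectors
(the orthogonal complement of the all-ones vector, which is the leading singular vector). -/
noncomputable def sigma2 {n : ℕ} (P : Matrix (Fin n) (Fin n) ℝ) : ℝ :=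
  sSup {r : ℝ | ∃ v : Fin n → ℝ, (∑ i, v i) = 0 ∧ l2norm v ≤ 1 ∧ r = l2norm (P.mulVec v)}


namespace AQNS

lemma l2norm_nonneg {n : ℕ} (v : Fin n → ℝ) : 0 ≤ l2norm v := Real.sqrt_nonneg _

lemma l2norm_sq {n : ℕ} (v : Fin n → ℝ) : l2norm v ^ 2 = ∑ i, v i ^ 2 :=
  Real.sq_sqrt (Finset.sum_nonneg fun _ _ => sq_nonneg _)

lemma ds_contract {n : ℕ} {P : Matrix (Fin n) (Fin n) ℝ} (hP : DoublyStochastic P)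
    (v : Fin n → ℝ) : ∑ k, (P.mulVec v k) ^ 2 ≤ ∑ j, v j ^ 2 := by
  obtain ⟨hnn, hrow, hcol⟩ := hP
  have h1 : ∀ k, (P.mulVec v k) ^ 2 ≤ ∑ j, P k j * v j ^ 2 := by
    intro k
    have hcs := Finset.sum_mul_sq_le_sq_mul_sq Finset.univ
      (fun j => Real.sqrt (P k j)) (fun j => Real.sqrt (P k j) * v j)
    have he : ∀ j, Real.sqrt (P k j) * (Real.sqrt (P k j) * v j) = P k j * v j := by
      intro j; rw [← mul_assoc, Real.mul_self_sqrt (hnn k j)]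
    have hf : ∀ j, Real.sqrt (P k j) ^ 2 = P k j := fun j => Real.sq_sqrt (hnn k j)
    have hg : ∀ j, (Real.sqrt (P k j) * v j) ^ 2 = P k j * v j ^ 2 := by
      intro j; rw [mul_pow, hf j]
    simp only [he, hf, hg, hrow k, one_mul] at hcs
    have : P.mulVec v k = ∑ j, P k j * v j := rfl
    rw [this]
    exact hcs
  calc ∑ k, (P.mulVec v k) ^ 2 ≤ ∑ k, ∑ j, P k j * v j ^ 2 :=
        Finset.sum_le_sum fun k _ => h1 k
    _ = ∑ j, (∑ k, P k j) * v j ^ 2 := by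
        rw [Finset.sum_comm]; exact Finset.sum_congr rfl fun j _ => (Finset.sum_mul ..).symm
    _ = ∑ j, v j ^ 2 := by simp [hcol]

lemma sigma2_spec {n : ℕ} {P : Matrix (Fin n) (Fin n) ℝ} (hP : DoublyStochastic P) :
    0 ≤ sigma2 P ∧
      ∀ v : Fin n → ℝ, (∑ i, v i) = 0 → l2norm (P.mulVec v) ≤ sigma2 P * l2norm v := by
  have hbdd : BddAbove {r : ℝ | ∃ v : Fin n → ℝ,
      (∑ i, v i) = 0 ∧ l2norm v ≤ 1 ∧ r = l2norm (P.mulVec v)} := by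
    refine ⟨1, fun r hr => ?_⟩
    obtain ⟨v, hv0, hv1, rfl⟩ := hr
    have h2 : l2norm (P.mulVec v) ≤ l2norm v := Real.sqrt_le_sqrt (ds_contract hP v)
    exact h2.trans hv1
  have h0mem : (0:ℝ) ∈ {r : ℝ | ∃ v : Fin n → ℝ,
      (∑ i, v i) = 0 ∧ l2norm v ≤ 1 ∧ r = l2norm (P.mulVec v)} := by
    refine ⟨0, by simp, ?_, ?_⟩
    · simp [l2norm]
    · simp [l2norm, Matrix.mulVec_zero]
  have hσ0 : 0 ≤ sigma2 P := le_csSup hbdd h0mem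
  refine ⟨hσ0, fun v hv => ?_⟩
  by_cases hz : ∑ i, v i ^ 2 = 0
  · have hv0 : v = 0 := by
      funext i
      have := (Finset.sum_eq_zero_iff_of_nonneg (fun j _ => sq_nonneg (v j))).mp hz i
        (Finset.mem_univ i)
      exact pow_eq_zero_iff two_ne_zero |>.mp this
    rw [hv0]
    simp [l2norm, Matrix.mulVec_zero]
  · have hpos : 0 < l2norm v := by
      apply Real.sqrt_pos.mpr
      exact lt_of_le_of_ne (Finset.sum_nonneg fun j _ => sq_nonneg _) (Ne.symm hz)
    set a := (l2norm v)⁻¹ with ha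
    have hapos : 0 < a := inv_pos.mpr hpos
    have hsmul : ∀ (b : ℝ) (u : Fin n → ℝ), 0 ≤ b → l2norm (b • u) = b * l2norm u := by
      intro b u hb
      unfold l2norm
      rw [show ∑ i, (b • u) i ^ 2 = b ^ 2 * ∑ i, u i ^ 2 by
        simp [mul_pow, Finset.mul_sum], Real.sqrt_mul (sq_nonneg b), Real.sqrt_sq hb]
    have hw0 : ∑ i, (a • v) i = 0 := by
      simp only [Pi.smul_apply, smul_eq_mul, ← Finset.mul_sum, hv, mul_zero]
    have hwl2 : l2norm (a • v) = 1 := by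
      rw [hsmul a v hapos.le, ha, inv_mul_cancel₀ hpos.ne']
    have hmem : l2norm (P.mulVec (a • v)) ∈ {r : ℝ | ∃ u : Fin n → ℝ,
        (∑ i, u i) = 0 ∧ l2norm u ≤ 1 ∧ r = l2norm (P.mulVec u)} :=
      ⟨a • v, hw0, le_of_eq hwl2, rfl⟩
    have hle : l2norm (P.mulVec (a • v)) ≤ sigma2 P := le_csSup hbdd hmem
    rw [Matrix.mulVec_smul, hsmul a _ hapos.le] at hle
    have := mul_le_mul_of_nonneg_left hle hpos.le
    rw [← mul_assoc, mul_inv_cancel₀ hpos.ne', one_mul] at this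
    linarith [this]

lemma pow_row_sum {n : ℕ} {P : Matrix (Fin n) (Fin n) ℝ} (hP : DoublyStochastic P) (m : ℕ)
    (k : Fin n) : ∑ j, (P ^ m) k j = 1 := by
  induction m with
  | zero => simp [Matrix.one_apply]
  | succ m ih =>
    rw [pow_succ]
    simp only [Matrix.mul_apply]
    rw [Finset.sum_comm]
    calc ∑ l, ∑ j, (P ^ m) k l * P l j = ∑ l, (P ^ m) k l * ∑ j, P l j := by
          exact Finset.sum_congr rfl fun l _ => (Finset.mul_sum ..).symm
      _ = 1 := by simp [hP.2.1, ih]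

lemma mulVec_sum_eq {n : ℕ} {P : Matrix (Fin n) (Fin n) ℝ} (hP : DoublyStochastic P)
    (v : Fin n → ℝ) : ∑ k, P.mulVec v k = ∑ j, v j := by
  have : ∀ k, P.mulVec v k = ∑ j, P k j * v j := fun _ => rfl
  simp only [this]
  rw [Finset.sum_comm]
  calc ∑ j, ∑ k, P k j * v j = ∑ j, (∑ k, P k j) * v j := by
        exact Finset.sum_congr rfl fun j _ => (Finset.sum_mul ..).symm
    _ = ∑ j, v j := by simp [hP.2.2]

lemma pow_mulVec_sum {n : ℕ} {P : Matrix (Fin n) (Fin n) ℝ} (hP : DoublyStochastic P) (m : ℕ)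
    (v : Fin n → ℝ) : ∑ k, (P ^ m).mulVec v k = ∑ j, v j := by
  induction m with
  | zero => simp [Matrix.one_mulVec]
  | succ m ih =>
    rw [pow_succ']
    rw [← Matrix.mulVec_mulVec]
    rw [mulVec_sum_eq hP]
    exact ih

lemma pow_contract {n : ℕ} {P : Matrix (Fin n) (Fin n) ℝ} (hP : DoublyStochastic P) (m : ℕ)
    (v : Fin n → ℝ) (hv : ∑ i, v i = 0) :
    l2norm ((P ^ m).mulVec v) ≤ sigma2 P ^ m * l2norm v := by
  induction m with
  | zero => simp [Matrix.one_mulVec]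
  | succ m ih =>
    rw [pow_succ', ← Matrix.mulVec_mulVec]
    have hsum0 : ∑ k, (P ^ m).mulVec v k = 0 := by rw [pow_mulVec_sum hP, hv]
    calc l2norm (P.mulVec ((P ^ m).mulVec v)) ≤ sigma2 P * l2norm ((P ^ m).mulVec v) :=
          (sigma2_spec hP).2 _ hsum0
      _ ≤ sigma2 P * (sigma2 P ^ m * l2norm v) :=
          mul_le_mul_of_nonneg_left ih (sigma2_spec hP).1
      _ = sigma2 P ^ (m + 1) * l2norm v := by rw [pow_succ']; ring

lemma row_sq_bound {n : ℕ} (hn : 0 < n) {P : Matrix (Fin n) (Fin n) ℝ}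
    (hP : DoublyStochastic P) (hsym : P.IsSymm) (m : ℕ) (i : Fin n) :
    ∑ j, ((n:ℝ)⁻¹ - (P ^ m) i j) ^ 2 ≤ sigma2 P ^ (2 * m) := by
  classical
  set v0 : Fin n → ℝ := fun j => (if j = i then (1:ℝ) else 0) - (n:ℝ)⁻¹ with hv0def
  have hnne : (n:ℝ) ≠ 0 := Nat.cast_ne_zero.mpr hn.ne'
  have hsum0 : ∑ j, v0 j = 0 := by
    simp [v0, Finset.sum_sub_distrib, Finset.card_univ, mul_inv_cancel₀ hnne]
  have hsq : ∑ j, v0 j ^ 2 ≤ 1 := by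
    have hexp : ∀ j, v0 j ^ 2 =
        (if j = i then (1:ℝ) else 0) - 2 * (if j = i then (1:ℝ) else 0) * (n:ℝ)⁻¹
          + (n:ℝ)⁻¹ ^ 2 := by
      intro j; by_cases h : j = i <;> simp [v0, h] <;> ring
    rw [Finset.sum_congr rfl fun j _ => hexp j]
    rw [Finset.sum_add_distrib, Finset.sum_sub_distrib]
    have h1 : ∑ j, (if j = i then (1:ℝ) else 0) = 1 := by simp
    have h2 : ∑ j, 2 * (if j = i then (1:ℝ) else 0) * (n:ℝ)⁻¹ = 2 * (n:ℝ)⁻¹ := by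
      simp [Finset.sum_ite_eq']
    have h3 : ∑ _j : Fin n, (n:ℝ)⁻¹ ^ 2 = (n:ℝ)⁻¹ := by
      rw [Finset.sum_const, Finset.card_univ, Fintype.card_fin, nsmul_eq_mul]
      field_simp
    rw [h1, h2, h3]
    have hinv : 0 ≤ (n:ℝ)⁻¹ := by positivity
    linarith
  have hl2v0 : l2norm v0 ≤ 1 := by
    have : l2norm v0 ≤ Real.sqrt 1 := Real.sqrt_le_sqrt hsq
    simpa using this
  have hmv : ∀ k, (P ^ m).mulVec v0 k = (P ^ m) k i - (n:ℝ)⁻¹ := by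
    intro k
    have : (P ^ m).mulVec v0 k = ∑ j, (P ^ m) k j * v0 j := rfl
    rw [this]
    simp only [v0, mul_sub, Finset.sum_sub_distrib, mul_ite, mul_one, mul_zero]
    rw [Finset.sum_ite_eq' Finset.univ i (fun j => (P ^ m) k j)]
    rw [← Finset.sum_mul, pow_row_sum hP m k, one_mul]
    simp
  have hsymm : ∀ j, (P ^ m) i j = (P ^ m) j i := fun j => (hsym.pow m).apply j i
  have key : ∑ j, ((n:ℝ)⁻¹ - (P ^ m) i j) ^ 2 = ∑ j, ((P ^ m).mulVec v0 j) ^ 2 := by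
    refine Finset.sum_congr rfl fun j _ => ?_
    rw [hmv j, hsymm j]
    ring
  rw [key]
  have hσ := (sigma2_spec hP).1
  have h1 : l2norm ((P ^ m).mulVec v0) ≤ sigma2 P ^ m := by
    calc l2norm ((P ^ m).mulVec v0) ≤ sigma2 P ^ m * l2norm v0 := pow_contract hP m v0 hsum0
      _ ≤ sigma2 P ^ m * 1 := mul_le_mul_of_nonneg_left hl2v0 (pow_nonneg hσ m)
      _ = sigma2 P ^ m := mul_one _
  have h2 : ∑ j, ((P ^ m).mulVec v0 j) ^ 2 = l2norm ((P ^ m).mulVec v0) ^ 2 :=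
    (l2norm_sq _).symm
  rw [h2]
  calc l2norm ((P ^ m).mulVec v0) ^ 2 ≤ (sigma2 P ^ m) ^ 2 :=
        pow_le_pow_left₀ (l2norm_nonneg _) h1 2
    _ = sigma2 P ^ (2 * m) := by rw [← pow_mul, mul_comm]



lemma integrable_of_indep_add {Ω : Type*} [MeasurableSpace Ω] {μ : Measure Ω}
    [IsProbabilityMeasure μ] {X Y : Ω → ℝ} (hX : Measurable X) (hY : Measurable Y)
    (h : IndepFun X Y μ) (hint : Integrable (fun ω => X ω + Y ω) μ) :
    Integrable X μ := by
  have hmap : μ.map (fun ω => (X ω, Y ω)) = (μ.map X).prod (μ.map Y) :=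
    (indepFun_iff_map_prod_eq_prod_map_map hX.aemeasurable hY.aemeasurable).mp h
  have hpm : Measurable fun ω => (X ω, Y ω) := hX.prodMk hY
  have h2 : Integrable (fun q : ℝ × ℝ => q.1 + q.2) (μ.map (fun ω => (X ω, Y ω))) := by
    rw [integrable_map_measure (g := fun q : ℝ × ℝ => q.1 + q.2)
      ((measurable_fst.add measurable_snd).aestronglyMeasurable) hpm.aemeasurable]
    exact hint
  rw [hmap] at h2
  haveI : IsProbabilityMeasure (μ.map X) := Measure.isProbabilityMeasure_map hX.aemeasurable
  haveI : IsProbabilityMeasure (μ.map Y) := Measure.isProbabilityMeasure_map hY.aemeasurable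
  have h3 := h2.prod_left_ae
  obtain ⟨y, hy⟩ := h3.exists
  have h4 : Integrable (fun x : ℝ => x) (μ.map X) := by
    have h5 := hy.sub (integrable_const y)
    have : (fun x : ℝ => (x, y).1 + (x, y).2) - (fun _ : ℝ => y) = fun x : ℝ => x := by
      funext x; simp
    rwa [this] at h5
  have h6 := (integrable_map_measure aestronglyMeasurable_id hX.aemeasurable).mp h4
  exact h6

lemma integrable_each {Ω ι : Type*} [MeasurableSpace Ω] {μ : Measure Ω} [IsProbabilityMeasure μ]
    {Y : ι → Ω → ℝ} (hmeas : ∀ p, Measurable (Y p))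
    (hind : iIndepFun Y μ) (A : Finset ι)
    (hint : Integrable (fun ω => ∑ p ∈ A, Y p ω) μ) : ∀ p ∈ A, Integrable (Y p) μ := by
  classical
  induction A using Finset.induction_on with
  | empty => intro p hp; simp at hp
  | @insert a A ha ih =>
    intro p hp
    have hsum : Integrable (fun ω => Y a ω + ∑ q ∈ A, Y q ω) μ := by
      have : (fun ω => ∑ p ∈ insert a A, Y p ω) = fun ω => Y a ω + ∑ q ∈ A, Y q ω := by
        funext ω; rw [Finset.sum_insert ha]
      rwa [this] at hint
    have hmsum : Measurable (fun ω => ∑ q ∈ A, Y q ω) :=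
      Finset.measurable_sum A fun q _ => hmeas q
    have hindAB : IndepFun (Y a) (∑ q ∈ A, Y q) μ :=
      (hind.indepFun_finsetSum_of_notMem hmeas ha).symm
    have hindAB' : IndepFun (Y a) (fun ω => ∑ q ∈ A, Y q ω) μ := by
      have : (∑ q ∈ A, Y q) = fun ω => ∑ q ∈ A, Y q ω := by
        funext ω; simp [Finset.sum_apply]
      rwa [this] at hindAB
    have hYa : Integrable (Y a) μ :=
      integrable_of_indep_add (hmeas a) hmsum hindAB' hsum
    have hrest : Integrable (fun ω => ∑ q ∈ A, Y q ω) μ := by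
      have h7 := hsum.sub hYa
      have : (fun ω => Y a ω + ∑ q ∈ A, Y q ω) - Y a = fun ω => ∑ q ∈ A, Y q ω := by
        funext ω; simp
      rwa [this] at h7
    rcases Finset.mem_insert.mp hp with rfl | hpA
    · exact hYa
    · exact ih hrest p hpA

end AQNS

/-- **Sub-Gaussian bound on accumulated quantization noise with zooming.**
The accumulated quantization noise
`S_i(t+1) = ∑_{r=1}^{t+1} ∑_j (1/n − [P^{t−r+2}]_{ij}) s(r−1) ξ_j(r−1)` is zero-mean and
sub-Gaussian with variance proxy at most `∑_{r=1}^{t+1} s²(r−1) σ₂(P)^{2(t−r+2)}`. -/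
theorem accumulated_quantization_noise_subgaussian
    {n : ℕ} (hn : 0 < n)
    (P : Matrix (Fin n) (Fin n) ℝ)
    (hPds : DoublyStochastic P) (hPsym : P.IsSymm) (hPσ : sigma2 P < 1)
    (s : ℕ → ℝ) (hs : ∀ r, 0 < s r)
    {Ω : Type*} [MeasurableSpace Ω] (μ : Measure Ω) [IsProbabilityMeasure μ]
    (t : ℕ)
    (ξ : Fin n → ℕ → Ω → ℝ)
    (hmeas : ∀ j r, Measurable (ξ j r))
    (hindep : iIndepFun
      (fun p : {q : Fin n × ℕ // q.2 ≤ t} => ξ p.1.1 p.1.2) μ)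
    (hmean : ∀ j r, r ≤ t → ∫ ω, ξ j r ω ∂μ = 0)
    (hsg : ∀ j r, r ≤ t → IsSubGaussian μ (fun ω => s r * ξ j r ω) (s r ^ 2))
    (i : Fin n) :
    (∫ ω, (∑ r ∈ Icc 1 (t + 1), ∑ j,
        ((n : ℝ)⁻¹ - (P ^ (t + 2 - r)) i j) * (s (r - 1) * ξ j (r - 1) ω)) ∂μ) = 0 ∧
    IsSubGaussian μ
      (fun ω => ∑ r ∈ Icc 1 (t + 1), ∑ j,
        ((n : ℝ)⁻¹ - (P ^ (t + 2 - r)) i j) * (s (r - 1) * ξ j (r - 1) ω))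
      (∑ r ∈ Icc 1 (t + 1), s (r - 1) ^ 2 * sigma2 P ^ (2 * (t + 2 - r))) := by
  classical
  haveI : Fintype {q : Fin n × ℕ // q.2 ≤ t} := Fintype.ofInjective
    (fun p : {q : Fin n × ℕ // q.2 ≤ t} =>
      ((p.1.1, ⟨p.1.2, Nat.lt_succ_of_le p.2⟩) : Fin n × Fin (t + 1)))
    (by
      rintro ⟨⟨a, b⟩, hb⟩ ⟨⟨c, d⟩, hd⟩ h
      simp only [Prod.mk.injEq, Fin.mk.injEq] at h
      exact Subtype.ext (by simp [h.1, h.2]))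
  set I := {q : Fin n × ℕ // q.2 ≤ t}
  let c : I → ℝ := fun p => (n : ℝ)⁻¹ - (P ^ (t + 1 - p.1.2)) i p.1.1
  let Y : I → Ω → ℝ := fun p ω => c p * (s p.1.2 * ξ p.1.1 p.1.2 ω)
  have hYmeas : ∀ p, Measurable (Y p) := fun p =>
    ((hmeas p.1.1 p.1.2).const_mul (s p.1.2)).const_mul (c p)
  have hYindep : iIndepFun Y μ :=
    hindep.comp (fun p (x : ℝ) => c p * (s p.1.2 * x))
      (fun p => (measurable_id.const_mul (s p.1.2)).const_mul (c p))
  -- reindexing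
  have hreindex : ∀ g : Fin n → ℕ → ℝ,
      (∑ r ∈ Icc 1 (t + 1), ∑ j, g j (r - 1)) = ∑ p : I, g p.1.1 p.1.2 := by
    intro g
    have hstep : (∑ r ∈ Icc 1 (t + 1), ∑ j, g j (r - 1))
        = ∑ q ∈ Icc 1 (t + 1) ×ˢ (Finset.univ : Finset (Fin n)), g q.2 (q.1 - 1) :=
      (Finset.sum_product (Icc 1 (t + 1)) Finset.univ (fun q => g q.2 (q.1 - 1))).symm
    rw [hstep]
    refine Finset.sum_bij' (i := fun q hq => (⟨(q.2, q.1 - 1), by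
        have h1 := (Finset.mem_product.mp hq).1
        have h2 := Finset.mem_Icc.mp h1
        omega⟩ : I))
      (j := fun p _ => (p.1.2 + 1, p.1.1)) ?_ ?_ ?_ ?_ ?_
    · intro a _; exact Finset.mem_univ _
    · rintro ⟨⟨j0, r0⟩, hp⟩ _
      refine Finset.mem_product.mpr ⟨Finset.mem_Icc.mpr ?_, Finset.mem_univ _⟩
      simp only at hp ⊢
      omega
    · rintro ⟨r, j0⟩ hq
      have h2 := Finset.mem_Icc.mp (Finset.mem_product.mp hq).1
      simp only [Prod.mk.injEq]
      exact ⟨by omega, trivial⟩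
    · rintro ⟨⟨j0, r0⟩, hp⟩ _
      apply Subtype.ext
      simp
    · rintro ⟨r, j0⟩ _
      rfl
  have hSrw : ∀ ω, (∑ r ∈ Icc 1 (t + 1), ∑ j,
      ((n : ℝ)⁻¹ - (P ^ (t + 2 - r)) i j) * (s (r - 1) * ξ j (r - 1) ω))
      = ∑ p : I, Y p ω := by
    intro ω
    rw [← hreindex (fun j r' => ((n : ℝ)⁻¹ - (P ^ (t + 1 - r')) i j) * (s r' * ξ j r' ω))]
    refine Finset.sum_congr rfl fun r hr => Finset.sum_congr rfl fun j _ => ?_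
    have h1 : t + 2 - r = t + 1 - (r - 1) := by
      have := Finset.mem_Icc.mp hr; omega
    rw [h1]
  have hYint0 : ∀ p : I, ∫ ω, Y p ω ∂μ = 0 := by
    intro p
    show ∫ ω, c p * (s p.1.2 * ξ p.1.1 p.1.2 ω) ∂μ = 0
    rw [integral_const_mul, integral_const_mul, hmean p.1.1 p.1.2 p.2, mul_zero, mul_zero]
  have hmean0 : (∫ ω, (∑ r ∈ Icc 1 (t + 1), ∑ j,
      ((n : ℝ)⁻¹ - (P ^ (t + 2 - r)) i j) * (s (r - 1) * ξ j (r - 1) ω)) ∂μ) = 0 := by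
    rw [show (fun ω => ∑ r ∈ Icc 1 (t + 1), ∑ j,
        ((n : ℝ)⁻¹ - (P ^ (t + 2 - r)) i j) * (s (r - 1) * ξ j (r - 1) ω))
        = fun ω => ∑ p : I, Y p ω from funext hSrw]
    by_cases hint : Integrable (fun ω => ∑ p : I, Y p ω) μ
    · rw [integral_finset_sum _ (fun p _ =>
        AQNS.integrable_each hYmeas hYindep Finset.univ hint p (Finset.mem_univ p))]
      exact Finset.sum_eq_zero fun p _ => hYint0 p
    · exact integral_undef hint
  refine ⟨hmean0, ?_⟩
  intro l
  dsimp only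
  rw [hmean0]
  simp only [sub_zero]
  have hmgf : (∫ ω, Real.exp (l * (∑ r ∈ Icc 1 (t + 1), ∑ j,
      ((n : ℝ)⁻¹ - (P ^ (t + 2 - r)) i j) * (s (r - 1) * ξ j (r - 1) ω))) ∂μ)
      = mgf (∑ p : I, Y p) μ l := by
    simp only [mgf, Finset.sum_apply]
    refine integral_congr_ae (Filter.Eventually.of_forall fun ω => ?_)
    dsimp only
    rw [hSrw ω]
  rw [hmgf, hYindep.mgf_sum hYmeas]
  have hfac : ∀ p : I, mgf (Y p) μ l ≤ Real.exp ((l * c p) ^ 2 * s p.1.2 ^ 2 / 2) := by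
    intro p
    have hsg' := hsg p.1.1 p.1.2 p.2 (l * c p)
    dsimp only at hsg'
    have hint0 : ∫ ω, s p.1.2 * ξ p.1.1 p.1.2 ω ∂μ = 0 := by
      rw [integral_const_mul, hmean p.1.1 p.1.2 p.2, mul_zero]
    rw [hint0] at hsg'
    simp only [sub_zero] at hsg'
    have heq : mgf (Y p) μ l
        = ∫ ω, Real.exp ((l * c p) * (s p.1.2 * ξ p.1.1 p.1.2 ω)) ∂μ := by
      simp only [mgf]
      refine integral_congr_ae (Filter.Eventually.of_forall fun ω => ?_)
      show Real.exp (l * (c p * (s p.1.2 * ξ p.1.1 p.1.2 ω)))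
        = Real.exp (l * c p * (s p.1.2 * ξ p.1.1 p.1.2 ω))
      rw [mul_assoc]
    rw [heq]
    exact hsg'
  calc ∏ p : I, mgf (Y p) μ l
      ≤ ∏ p : I, Real.exp ((l * c p) ^ 2 * s p.1.2 ^ 2 / 2) :=
        Finset.prod_le_prod (fun p _ => mgf_nonneg) (fun p _ => hfac p)
    _ = Real.exp (∑ p : I, (l * c p) ^ 2 * s p.1.2 ^ 2 / 2) := (Real.exp_sum _ _).symm
    _ ≤ Real.exp (l ^ 2 * (∑ r ∈ Icc 1 (t + 1),
          s (r - 1) ^ 2 * sigma2 P ^ (2 * (t + 2 - r))) / 2) := by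
        apply Real.exp_le_exp.mpr
        rw [← hreindex (fun j r' =>
          (l * ((n : ℝ)⁻¹ - (P ^ (t + 1 - r')) i j)) ^ 2 * s r' ^ 2 / 2)]
        rw [Finset.mul_sum, Finset.sum_div]
        refine Finset.sum_le_sum fun r hr => ?_
        have hIcc := Finset.mem_Icc.mp hr
        have hexp : t + 1 - (r - 1) = t + 2 - r := by omega
        rw [hexp]
        have hrow := AQNS.row_sq_bound hn hPds hPsym (t + 2 - r) i
        calc ∑ j, (l * ((n : ℝ)⁻¹ - (P ^ (t + 2 - r)) i j)) ^ 2 * s (r - 1) ^ 2 / 2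
            = (l ^ 2 * s (r - 1) ^ 2 / 2) * ∑ j, ((n : ℝ)⁻¹ - (P ^ (t + 2 - r)) i j) ^ 2 := by
              rw [Finset.mul_sum]
              exact Finset.sum_congr rfl fun j _ => by ring
          _ ≤ (l ^ 2 * s (r - 1) ^ 2 / 2) * sigma2 P ^ (2 * (t + 2 - r)) := by
              apply mul_le_mul_of_nonneg_left hrow
              positivity
          _ = l ^ 2 * (s (r - 1) ^ 2 * sigma2 P ^ (2 * (t + 2 - r))) / 2 := by ring
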